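/- For every i ∈ ℕ, every p ∈ (0,1] and every n ∈ ℕ, the probability that the right edges of the i-th strengthened process and of the oriented percolation process differ at time n satisfies P( _pX̄^{(i)}_n ≠ _pX̄^{(∞)}_n ) ≤ (1 − p^n)^{i+1}. -/

import Mathlib

open MeasureTheory ProbabilityTheory Filter Set
open scoped ENat ENNReal

noncomputable section

/-- Direction of a bond: `true` = right (`+1`), `false` = left (`-1`). -/
def dir (j : Bool) : ℤ := if j then 1 else -1

/-- An environment: a realization of the family of uniform random variables
`ξ^j_{n,m}`, indexed by time `n`, space `m` and direction `j`. -/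
abbrev Env := ℕ → ℤ → Bool → ℝ

/-- The bond from site `(n,m)` in direction `j` is open at level `p`,
i.e. the Bernoulli variable `_pξ^j_{n,m} = 1_{ξ^j_{n,m} ≤ p}` equals `1`. -/
def bondOpen (p : ℝ) (u : Env) (n : ℕ) (m : ℤ) (j : Bool) : Bool :=
  @decide (u n m j ≤ p) (Classical.propDecidable _)

/-- The position of the right edge after one step from configuration `c` at time `n`:
`sup { m + j : c m = 1, bond (n,m,j) open }`. -/
def nextEdge (p : ℝ) (u : Env) (n : ℕ) (c : ℤ → Bool) : ℤ :=
  sSup {x : ℤ | ∃ m j, c m = true ∧ bondOpen p u n m j = true ∧ x = m + dir j}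

/-- Forced (re)infection indicator for a site lying at (even) distance `d`
behind the new edge, when `d > 2i`; for `i = ∞` there is no forced infection. -/
def forced (i : ℕ∞) (d : ℤ) : Bool :=
  @decide (Even d ∧ 2 * i < (d.toNat : ℕ∞)) (Classical.propDecidable _)

/-- The strengthened discrete-time contact process (SDTCP) of order `i ∈ ℕ ∪ {∞}`,
with infection parameter `p`, environment `u`, and initial configuration `η`. -/
def Xproc (i : ℕ∞) (p : ℝ) (u : Env) (η : ℤ → Bool) : ℕ → ℤ → Bool
  | 0 => η
  | n + 1 => fun m =>
      (Xproc i p u η n (m - 1) && bondOpen p u n (m - 1) true) ||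
      (Xproc i p u η n (m + 1) && bondOpen p u n (m + 1) false) ||
      forced i (nextEdge p u n (Xproc i p u η n) - m)

/-- The right edge process, with the convention `edge 0 = 0`. -/
def edge (i : ℕ∞) (p : ℝ) (u : Env) (η : ℤ → Bool) : ℕ → ℤ
  | 0 => 0
  | n + 1 => nextEdge p u n (Xproc i p u η n)

/-- The standard initial configuration `1_{· ≤ 0}` on the even sites. -/
def η₀ : ℤ → Bool := fun m => @decide (m ≤ 0 ∧ Even m) (Classical.propDecidable _)

/-- States of the induced Markov chain of order `i`: configurations of the `i`
sites at distances `2, 4, …, 2i` behind the right edge. -/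
abbrev IMCState (i : ℕ) := Fin i → Bool

/-- The induced Markov chain: `Y n (j) = X n (edge n − 2(j+1))`. -/
def Yproc (i : ℕ) (p : ℝ) (u : Env) (η : ℤ → Bool) (n : ℕ) : IMCState i :=
  fun j => Xproc (i : ℕ∞) p u η n (edge (i : ℕ∞) p u η n - 2 * ((j : ℤ) + 1))

/-- The initial configuration `η_σ` associated with a state `σ` of the induced
Markov chain: edge at `0`, configuration `σ` at `−2, …, −2i`, everything
infected below `−2i`, everything healthy above `0`. -/
def ησ (i : ℕ) (σ : IMCState i) : ℤ → Bool := fun m =>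
  @decide (Even m ∧ (m = 0 ∨ m < -(2 * (i : ℤ)) ∨
      ∃ j : Fin i, m = -(2 * ((j : ℤ) + 1)) ∧ σ j = true))
    (Classical.propDecidable _)

variable {Ω : Type*}

/-- The probabilistic set-up: `ℙ` is a probability measure and the `ξ^j_{n,m}`
are i.i.d. random variables, uniformly distributed on `[0,1]`. -/
def UniformBonds [MeasureSpace Ω] (ξ : Ω → Env) : Prop :=
  IsProbabilityMeasure (ℙ : Measure Ω) ∧
  (∀ n m j, Measurable fun ω => ξ ω n m j) ∧
  iIndepFun (β := fun _ : ℕ × ℤ × Bool => ℝ)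
    (fun v ω => ξ ω v.1 v.2.1 v.2.2) ℙ ∧
  ∀ n m j, (ℙ : Measure Ω).map (fun ω => ξ ω n m j)
      = (volume : Measure ℝ).restrict (Set.Icc 0 1)

/-- Transition probability `q^{(i)}_{στ}(p)` of the induced Markov chain:
the probability that one step of the chain started from state `σ` leads to `τ`. -/
def kernel [MeasureSpace Ω] (ξ : Ω → Env) (i : ℕ) (p : ℝ) (σ τ : IMCState i) : ℝ :=
  (ℙ {ω | Yproc i p (ξ ω) (ησ i σ) 1 = τ}).toReal

/-- `π` is a stationary probability distribution for the induced Markov chain. -/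
def IsStationaryDist [MeasureSpace Ω] (ξ : Ω → Env) (i : ℕ) (p : ℝ)
    (π : IMCState i → ℝ) : Prop :=
  (∀ σ, 0 ≤ π σ) ∧ (∑ σ, π σ = 1) ∧
    ∀ τ, (∑ σ, π σ * kernel ξ i p σ τ) = π τ

/-- The mean jump `M^{(i)}_σ(p)` of the right edge from state `σ`
(Definition 2.4): `Σ_k Σ_τ (1 − 2k) P^{(i)}_{(σ,τ,k)}(p)`. -/
def meanJump [MeasureSpace Ω] (ξ : Ω → Env) (i : ℕ) (p : ℝ) (σ : IMCState i) : ℝ :=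
  ∑' k : ℕ, ∑ τ : IMCState i, (1 - 2 * (k : ℝ)) *
    (ℙ {ω | edge (i : ℕ∞) p (ξ ω) (ησ i σ) 1 = 1 - 2 * (k : ℤ) ∧
        Yproc i p (ξ ω) (ησ i σ) 1 = τ}).toReal

/-- The mean edge drift `M^{(i)}(p)` computed from a stationary measure `π`
(Definition 2.5). -/
def meanDrift [MeasureSpace Ω] (ξ : Ω → Env) (i : ℕ) (p : ℝ)
    (π : IMCState i → ℝ) : ℝ :=
  ∑ σ, meanJump ξ i p σ * π σ

/-- `a ∈ ℝ ∪ {±∞}` is the almost sure asymptotic speed of the right edge of the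
process of order `i ∈ ℕ ∪ {∞}` started from `1_{· ≤ 0}`. -/
def IsEdgeSpeed [MeasureSpace Ω] (ξ : Ω → Env) (i : ℕ∞) (p : ℝ) (a : EReal) : Prop :=
  ∀ᵐ ω ∂ℙ, Tendsto (fun n : ℕ => (((edge i p (ξ ω) η₀ n : ℤ) : ℝ) / n : EReal))
    atTop (nhds a)

/-- `pc i = p_c^{(i)}` is, for each `i ∈ ℕ`, a root in `(0,1]` of the mean edge
drift `M^{(i)}` (computed from a stationary measure of the induced chain). -/
def IsCriticalSeq [MeasureSpace Ω] (ξ : Ω → Env) (pc : ℕ → ℝ) : Prop :=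
  ∀ i, pc i ∈ Set.Ioc (0 : ℝ) 1 ∧
    ∃ π, IsStationaryDist ξ i (pc i) π ∧ meanDrift ξ i (pc i) π = 0

/-! ### Auxiliary lemmas for the proof -/

lemma aux_dir_le_one (j : Bool) : dir j ≤ 1 := by cases j <;> simp [dir]

lemma aux_forced_top (d : ℤ) : forced ⊤ d = false := by
  simp only [forced, decide_eq_false_iff_not]
  rintro ⟨-, h⟩
  rw [show (2 : ℕ∞) * ⊤ = ⊤ by simp] at h
  exact not_top_lt h

lemma aux_forced_false {i : ℕ} {d : ℤ} (h : d ≤ 2 * i) : forced (i : ℕ∞) d = false := by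
  simp only [forced, decide_eq_false_iff_not]
  rintro ⟨-, hlt⟩
  have h1 : d.toNat ≤ 2 * i := by omega
  have h2 : ((d.toNat : ℕ) : ℕ∞) ≤ ((2 * i : ℕ) : ℕ∞) := by exact_mod_cast h1
  rw [Nat.cast_mul, Nat.cast_ofNat] at h2
  exact absurd hlt (not_lt.mpr h2)

lemma aux_forced_pos {i : ℕ∞} {d : ℤ} (h : forced i d = true) : 1 ≤ d := by
  simp only [forced, decide_eq_true_eq] at h
  obtain ⟨-, hlt⟩ := h
  by_contra hd
  push_neg at hd
  have h0 : d.toNat = 0 := by omega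
  rw [h0] at hlt
  simp at hlt

lemma aux_nextEdge_le (p : ℝ) (u : Env) (t : ℕ) (c : ℤ → Bool) (b : ℤ) (hb : 0 ≤ b)
    (hc : ∀ m, c m = true → m + 1 ≤ b) : nextEdge p u t c ≤ b := by
  rcases Set.eq_empty_or_nonempty
      {x : ℤ | ∃ m j, c m = true ∧ bondOpen p u t m j = true ∧ x = m + dir j} with h | h
  · unfold nextEdge
    rw [h, Int.csSup_empty]
    exact hb
  · unfold nextEdge
    apply csSup_le h
    rintro x ⟨m, j, hm, -, rfl⟩
    have h1 := hc m hm
    have h2 := aux_dir_le_one j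
    linarith

lemma aux_X_le (i : ℕ∞) (p : ℝ) (u : Env) :
    ∀ t m, Xproc i p u η₀ t m = true → m ≤ (t : ℤ) := by
  intro t
  induction t with
  | zero =>
    intro m h
    simp only [Xproc, η₀, decide_eq_true_eq] at h
    exact_mod_cast h.1
  | succ t ih =>
    intro m h
    simp only [Xproc, Bool.or_eq_true, Bool.and_eq_true] at h
    rcases h with (⟨h1, -⟩ | ⟨h1, -⟩) | hf
    · have := ih _ h1; push_cast; omega
    · have := ih _ h1; push_cast; omega
    · have h1 := aux_forced_pos hf
      have h2 : nextEdge p u t (Xproc i p u η₀ t) ≤ (t : ℤ) + 1 :=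
        aux_nextEdge_le _ _ _ _ _ (by positivity) (fun m' hm' => by have := ih m' hm'; omega)
      push_cast; omega

lemma aux_edges_eq (i k n : ℕ) (hk : k ≤ i) (p : ℝ) (u : Env)
    (hA : ∀ t < n, bondOpen p u t ((t : ℤ) - 2 * k) true = true) :
    edge (i : ℕ∞) p u η₀ n = edge ⊤ p u η₀ n := by
  suffices H : ∀ t, t ≤ n →
      (edge (i : ℕ∞) p u η₀ t = edge ⊤ p u η₀ t) ∧
      (∀ m, (t : ℤ) - 2 * k ≤ m → Xproc (i : ℕ∞) p u η₀ t m = Xproc ⊤ p u η₀ t m) ∧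
      Xproc ⊤ p u η₀ t ((t : ℤ) - 2 * k) = true by
    exact (H n le_rfl).1
  intro t
  induction t with
  | zero =>
    intro _
    refine ⟨rfl, fun m _ => rfl, ?_⟩
    show η₀ _ = true
    simp only [η₀, decide_eq_true_eq]
    refine ⟨by push_cast; omega, ⟨-(k : ℤ), by push_cast; ring⟩⟩
  | succ t ih =>
    intro ht1
    obtain ⟨hE, hC, hD⟩ := ih (by omega)
    have hb : bondOpen p u t ((t : ℤ) - 2 * k) true = true := hA t (by omega)
    have hXi : Xproc (i : ℕ∞) p u η₀ t ((t : ℤ) - 2 * k) = true := by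
      rw [hC _ le_rfl]; exact hD
    set Si := {x : ℤ | ∃ m j, Xproc (i : ℕ∞) p u η₀ t m = true ∧
        bondOpen p u t m j = true ∧ x = m + dir j} with hSi
    set St := {x : ℤ | ∃ m j, Xproc ⊤ p u η₀ t m = true ∧
        bondOpen p u t m j = true ∧ x = m + dir j} with hSt
    have hnei : nextEdge p u t (Xproc (i : ℕ∞) p u η₀ t) = sSup Si := rfl
    have hnet : nextEdge p u t (Xproc ⊤ p u η₀ t) = sSup St := rfl
    have hx0i : (t : ℤ) - 2 * k + 1 ∈ Si :=
      ⟨(t : ℤ) - 2 * k, true, hXi, hb, by simp [dir]⟩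
    have hx0t : (t : ℤ) - 2 * k + 1 ∈ St :=
      ⟨(t : ℤ) - 2 * k, true, hD, hb, by simp [dir]⟩
    have hbdi : BddAbove Si := by
      refine ⟨(t : ℤ) + 1, ?_⟩
      rintro x ⟨m, j, hm, -, rfl⟩
      have h1 := aux_X_le _ p u t m hm
      have h2 := aux_dir_le_one j
      linarith
    have hbdt : BddAbove St := by
      refine ⟨(t : ℤ) + 1, ?_⟩
      rintro x ⟨m, j, hm, -, rfl⟩
      have h1 := aux_X_le _ p u t m hm
      have h2 := aux_dir_le_one j
      linarith
    have hiff : ∀ x, (t : ℤ) - 2 * k + 1 ≤ x → (x ∈ Si ↔ x ∈ St) := by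
      intro x hx
      constructor
      · rintro ⟨m, j, hm, hbo, rfl⟩
        have h2 := aux_dir_le_one j
        have hm' : (t : ℤ) - 2 * k ≤ m := by linarith
        exact ⟨m, j, by rw [← hC m hm']; exact hm, hbo, rfl⟩
      · rintro ⟨m, j, hm, hbo, rfl⟩
        have h2 := aux_dir_le_one j
        have hm' : (t : ℤ) - 2 * k ≤ m := by linarith
        exact ⟨m, j, by rw [hC m hm']; exact hm, hbo, rfl⟩
    have hmi : sSup Si ∈ Si := Int.csSup_mem ⟨_, hx0i⟩ hbdi
    have hmt : sSup St ∈ St := Int.csSup_mem ⟨_, hx0t⟩ hbdt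
    have h3i : (t : ℤ) - 2 * k + 1 ≤ sSup Si := le_csSup hbdi hx0i
    have h3t : (t : ℤ) - 2 * k + 1 ≤ sSup St := le_csSup hbdt hx0t
    have hsup : sSup Si = sSup St :=
      le_antisymm (le_csSup hbdt ((hiff _ h3i).mp hmi))
        (le_csSup hbdi ((hiff _ h3t).mpr hmt))
    have hle : sSup Si ≤ (t : ℤ) + 1 := by
      obtain ⟨m, j, hm, -, he⟩ := hmi
      have h1 := aux_X_le _ p u t m hm
      have h2 := aux_dir_le_one j
      rw [he]; linarith
    have hEef : edge (i : ℕ∞) p u η₀ (t + 1) = edge ⊤ p u η₀ (t + 1) := by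
      show nextEdge p u t _ = nextEdge p u t _
      rw [hnei, hnet, hsup]
    refine ⟨hEef, ?_, ?_⟩
    · intro m hm
      push_cast at hm
      show Xproc (i : ℕ∞) p u η₀ (t + 1) m = Xproc ⊤ p u η₀ (t + 1) m
      simp only [Xproc]
      rw [hC (m - 1) (by linarith), hC (m + 1) (by linarith), aux_forced_top]
      have hki : (k : ℤ) ≤ (i : ℤ) := by exact_mod_cast hk
      have hforced : forced (i : ℕ∞) (nextEdge p u t (Xproc (i : ℕ∞) p u η₀ t) - m) = false := by
        apply aux_forced_false
        rw [hnei]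
        linarith
      rw [hforced]
    · show Xproc ⊤ p u η₀ (t + 1) _ = true
      simp only [Xproc]
      have e1 : ((t + 1 : ℕ) : ℤ) - 2 * k - 1 = (t : ℤ) - 2 * k := by push_cast; ring
      rw [e1, hD, hb, aux_forced_top]
      simp

lemma aux_key {Ω : Type*} [MeasureSpace Ω] {ι : Type*} [DecidableEq ι]
    (f : ι → Ω → ℝ)
    (hfm : ∀ v, Measurable (f v))
    (hind : iIndepFun (β := fun _ : ι => ℝ) f ℙ)
    (p : ℝ) (S : ℕ → Finset ι)
    (hdisj : ∀ K, Disjoint (S K) (Finset.biUnion (Finset.range K) S)) :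
    ∀ K, ℙ (⋂ k ∈ Finset.range K, (⋂ v ∈ S k, f v ⁻¹' Set.Iic p)ᶜ)
      = ∏ k ∈ Finset.range K, ℙ ((⋂ v ∈ S k, f v ⁻¹' Set.Iic p)ᶜ) := by
  haveI : IsProbabilityMeasure (ℙ : Measure Ω) := hind.isProbabilityMeasure
  intro K
  induction K with
  | zero => simp
  | succ K ihK =>
    set T := Finset.biUnion (Finset.range K) S with hT
    have hI := hind.indepFun_finset (S K) T (hdisj K) hfm
    set Us : Set ((v : {x // x ∈ S K}) → ℝ) := {g | ∀ v, g v ≤ p} with hUs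
    set Ut : Set ((v : {x // x ∈ T}) → ℝ) :=
      {g | ∀ k ∈ Finset.range K, ∃ v : {x // x ∈ T}, (v : ι) ∈ S k ∧ p < g v} with hUt
    have hUsm : MeasurableSet Us := by
      have h1 : Us = ⋂ v : {x // x ∈ S K}, (fun g : (v : {x // x ∈ S K}) → ℝ => g v) ⁻¹'
          Set.Iic p := by
        ext g; simp [hUs]
      rw [h1]
      exact MeasurableSet.iInter fun v => (measurable_pi_apply v) measurableSet_Iic
    have hUtm : MeasurableSet Ut := by
      have h1 : Ut = ⋂ k ∈ Finset.range K,
          ⋃ v : {x // x ∈ T}, {g : (v : {x // x ∈ T}) → ℝ | (v : ι) ∈ S k ∧ p < g v} := by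
        ext g; simp [hUt]
      rw [h1]
      refine MeasurableSet.biInter (Finset.range K).countable_toSet fun k _ =>
        MeasurableSet.iUnion fun v => ?_
      by_cases h : (v : ι) ∈ S k
      · have h2 : {g : (v : {x // x ∈ T}) → ℝ | (v : ι) ∈ S k ∧ p < g v}
            = (fun g : (v : {x // x ∈ T}) → ℝ => g v) ⁻¹' Set.Ioi p := by
          ext g; simp [h]
        rw [h2]
        exact (measurable_pi_apply v) measurableSet_Ioi
      · have h2 : {g : (v : {x // x ∈ T}) → ℝ | (v : ι) ∈ S k ∧ p < g v} = ∅ := by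
          ext g; simp [h]
        rw [h2]
        exact MeasurableSet.empty
    have hE1 : (⋂ v ∈ S K, f v ⁻¹' Set.Iic p)ᶜ
        = (fun a (v : {x // x ∈ S K}) => f (v : ι) a) ⁻¹' Usᶜ := by
      have h1 : (⋂ v ∈ S K, f v ⁻¹' Set.Iic p)
          = (fun a (v : {x // x ∈ S K}) => f (v : ι) a) ⁻¹' Us := by
        ext ω
        simp [hUs, Set.mem_iInter, Subtype.forall]
      rw [Set.preimage_compl, h1]
    have hE2 : (⋂ k ∈ Finset.range K, (⋂ v ∈ S k, f v ⁻¹' Set.Iic p)ᶜ)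
        = (fun a (v : {x // x ∈ T}) => f (v : ι) a) ⁻¹' Ut := by
      ext ω
      simp only [Set.mem_iInter, Set.mem_compl_iff, Set.mem_preimage, hUt, Set.mem_setOf_eq]
      constructor
      · intro h k hk
        have h1 := h k hk
        push_neg at h1
        obtain ⟨v, hv, hfv⟩ := h1
        refine ⟨⟨v, Finset.mem_biUnion.mpr ⟨k, hk, hv⟩⟩, hv, ?_⟩
        simpa [not_le] using hfv
      · intro h k hk
        obtain ⟨v, hv, hfv⟩ := h k hk
        intro hmem
        have h2 := hmem (v : ι) hv
        simp only [Set.mem_Iic] at h2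
        exact absurd h2 (not_le.mpr hfv)
    rw [Finset.range_add_one, Finset.set_biInter_insert,
      Finset.prod_insert Finset.notMem_range_self, ← ihK, hE1, hE2,
      hI.measure_inter_preimage_eq_mul _ _ hUsm.compl hUtm, ← hE1, ← hE2]

/-- For every `i ∈ ℕ`, every `p ∈ (0,1]` and every `n ∈ ℕ`, the probability
that the right edges of the `i`-th strengthened process and of oriented
percolation differ at time `n` is at most `(1 − pⁿ)^{i+1}`. -/
theorem edge_differ_prob_bound {Ω : Type*} [MeasureSpace Ω] (ξ : Ω → Env)
    (hξ : UniformBonds ξ) (i : ℕ) (p : ℝ) (hp : p ∈ Set.Ioc (0 : ℝ) 1) (n : ℕ) :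
    (ℙ {ω | edge (i : ℕ∞) p (ξ ω) η₀ n ≠ edge ⊤ p (ξ ω) η₀ n}).toReal
      ≤ (1 - p ^ n) ^ (i + 1) := by
  classical
  obtain ⟨hprob, hmeas, hind, hlaw⟩ := hξ
  haveI := hprob
  have hp0 : 0 < p := hp.1
  have hp1 : p ≤ 1 := hp.2
  have hpn1 : p ^ n ≤ 1 := pow_le_one₀ hp0.le hp1
  have hpn0 : 0 ≤ p ^ n := pow_nonneg hp0.le n
  set f : ℕ × ℤ × Bool → Ω → ℝ := fun v ω => ξ ω v.1 v.2.1 v.2.2 with hf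
  have hfm : ∀ v, Measurable (f v) := fun v => hmeas v.1 v.2.1 v.2.2
  set A : ℕ × ℤ × Bool → Set Ω := fun v => f v ⁻¹' Set.Iic p with hA
  have hAm : ∀ v, MeasurableSet (A v) := fun v => (hfm v) measurableSet_Iic
  have hAp : ∀ v, ℙ (A v) = ENNReal.ofReal p := by
    intro v
    have h1 : ℙ (A v) = (Measure.map (f v) ℙ) (Set.Iic p) :=
      (Measure.map_apply (hfm v) measurableSet_Iic).symm
    have h2 : Measure.map (f v) ℙ = (volume : Measure ℝ).restrict (Set.Icc 0 1) :=
      hlaw v.1 v.2.1 v.2.2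
    have h3 : Set.Iic p ∩ Set.Icc (0 : ℝ) 1 = Set.Icc 0 p := by
      ext x
      simp only [Set.mem_inter_iff, Set.mem_Iic, Set.mem_Icc]
      constructor
      · rintro ⟨ha, hb, hc⟩; exact ⟨hb, ha⟩
      · rintro ⟨ha, hb⟩; exact ⟨hb, ha, by linarith⟩
    rw [h1, h2, Measure.restrict_apply measurableSet_Iic, h3, Real.volume_Icc, sub_zero]
  set vk : ℕ → ℕ → ℕ × ℤ × Bool := fun k t => (t, (t : ℤ) - 2 * k, true) with hvk
  set Sk : ℕ → Finset (ℕ × ℤ × Bool) := fun k => (Finset.range n).image (vk k) with hSk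
  have hvk_inj : ∀ k, Function.Injective (vk k) := fun k a b h => congrArg Prod.fst h
  set G : ℕ → Set Ω := fun k => ⋂ v ∈ Sk k, A v with hG
  have hGm : ∀ k, MeasurableSet (G k) := fun k =>
    MeasurableSet.biInter (Sk k).countable_toSet fun v _ => hAm v
  have hGp : ∀ k, ℙ (G k) = ENNReal.ofReal (p ^ n) := by
    intro k
    have h1 : ℙ (⋂ v ∈ Sk k, A v) = ∏ v ∈ Sk k, ℙ (A v) :=
      hind.meas_biInter (S := Sk k) (s := A)
        (fun v _ => ⟨Set.Iic p, measurableSet_Iic, rfl⟩)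
    have h2 : (Sk k).card = n := by
      rw [hSk]
      simp [Finset.card_image_of_injective _ (hvk_inj k)]
    calc ℙ (G k) = ∏ v ∈ Sk k, ℙ (A v) := h1
      _ = ∏ _v ∈ Sk k, ENNReal.ofReal p := Finset.prod_congr rfl fun v _ => hAp v
      _ = ENNReal.ofReal p ^ (Sk k).card := Finset.prod_const _
      _ = ENNReal.ofReal p ^ n := by rw [h2]
      _ = ENNReal.ofReal (p ^ n) := (ENNReal.ofReal_pow hp0.le n).symm
  have hGc : ∀ k, ℙ ((G k)ᶜ) = 1 - ENNReal.ofReal (p ^ n) := fun k => by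
    rw [prob_compl_eq_one_sub (hGm k), hGp k]
  have hdisj : ∀ K, Disjoint (Sk K) (Finset.biUnion (Finset.range K) Sk) := by
    intro K
    rw [Finset.disjoint_left]
    intro v hv hv'
    obtain ⟨t, ht, rfl⟩ := Finset.mem_image.mp hv
    obtain ⟨k, hkK, hk2⟩ := Finset.mem_biUnion.mp hv'
    obtain ⟨t', ht', he⟩ := Finset.mem_image.mp hk2
    have h1 : t' = t := congrArg Prod.fst he
    have h2 : (t' : ℤ) - 2 * k = (t : ℤ) - 2 * K := congrArg (fun w => w.2.1) he
    have h3 : k < K := Finset.mem_range.mp hkK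
    omega
  have key : ℙ (⋂ k ∈ Finset.range (i + 1), (G k)ᶜ)
      = (1 - ENNReal.ofReal (p ^ n)) ^ (i + 1) := by
    have h1 := aux_key f hfm hind p Sk hdisj (i + 1)
    calc ℙ (⋂ k ∈ Finset.range (i + 1), (G k)ᶜ)
        = ∏ k ∈ Finset.range (i + 1), ℙ ((G k)ᶜ) := h1
      _ = ∏ _k ∈ Finset.range (i + 1), (1 - ENNReal.ofReal (p ^ n)) :=
          Finset.prod_congr rfl fun k _ => hGc k
      _ = (1 - ENNReal.ofReal (p ^ n)) ^ (i + 1) := by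
          rw [Finset.prod_const, Finset.card_range]
  have hsub : {ω | edge (i : ℕ∞) p (ξ ω) η₀ n ≠ edge ⊤ p (ξ ω) η₀ n}
      ⊆ ⋂ k ∈ Finset.range (i + 1), (G k)ᶜ := by
    intro ω hω
    rw [Set.mem_iInter₂]
    intro k hk
    intro hmem
    apply hω
    apply aux_edges_eq i k n (Nat.lt_succ_iff.mp (Finset.mem_range.mp hk)) p (ξ ω)
    intro t ht
    have h1 : vk k t ∈ Sk k := Finset.mem_image_of_mem _ (Finset.mem_range.mpr ht)
    have h2 := Set.mem_iInter₂.mp hmem _ h1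
    simp only [bondOpen, decide_eq_true_eq]
    exact h2
  have hmono := measure_mono (μ := (ℙ : Measure Ω)) hsub
  rw [key] at hmono
  have h2 : (1 : ℝ≥0∞) - ENNReal.ofReal (p ^ n) = ENNReal.ofReal (1 - p ^ n) := by
    rw [ENNReal.ofReal_sub 1 hpn0, ENNReal.ofReal_one]
  have h3 : (1 - ENNReal.ofReal (p ^ n)) ^ (i + 1)
      = ENNReal.ofReal ((1 - p ^ n) ^ (i + 1)) := by
    rw [h2, ← ENNReal.ofReal_pow (by linarith)]
  rw [h3] at hmono
  calc (ℙ {ω | edge (i : ℕ∞) p (ξ ω) η₀ n ≠ edge ⊤ p (ξ ω) η₀ n}).toReal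
      ≤ (ENNReal.ofReal ((1 - p ^ n) ^ (i + 1))).toReal :=
        ENNReal.toReal_mono ENNReal.ofReal_ne_top hmono
    _ = (1 - p ^ n) ^ (i + 1) := ENNReal.toReal_ofReal (pow_nonneg (by linarith) _)
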